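/- For any alcove x and 1 ≤ j ≤ n, the j-fold rotation satisfies rot^j(x)^{(i)} = c^{-j}(x^{(i+j)} - ϖ_j) if 1 ≤ i ≤ n-j, and rot^j(x)^{(i)} = c^{-j}(x^{(i-n+j)} - ϖ_{i-n+j-1}) + ϖ_{i-1} if n-j < i ≤ n. In particular rot^n(x) = x. -/

import Mathlib

open Finset

/-- Standard basis vector `e_j` in `ℤⁿ`. -/
def ev (n : ℕ) (j : Fin n) : Fin n → ℤ := fun k => if k = j then 1 else 0

/-- The coweight `ϖ_t = e_1 + ⋯ + e_t` (t ones followed by zeros). -/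
def varpi (n t : ℕ) : Fin n → ℤ := fun j => if (j : ℕ) < t then 1 else 0

/-- Dominance order `μ ⪯ λ`: equal total sums, partial sums of `μ` bounded by those of `λ`. -/
def DomLE {n : ℕ} (μ lam : Fin n → ℤ) : Prop :=
  (∑ i, μ i = ∑ i, lam i) ∧
  ∀ k : Fin n, ∑ i ∈ Finset.Iic k, μ i ≤ ∑ i ∈ Finset.Iic k, lam i

/-- A coweight is dominant iff its coordinates are weakly decreasing. -/
def IsDominant {n : ℕ} (v : Fin n → ℤ) : Prop := ∀ i j : Fin n, i ≤ j → v j ≤ v i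

/-- The weakly decreasing rearrangement `dom(v)` of `v`. -/
noncomputable def domOf {n : ℕ} (v : Fin n → ℤ) : Fin n → ℤ :=
  v ∘ Tuple.sort (fun i => -v i)

/-- `succA x i` is `x^{(i+1)}`, with the convention `x^{(n+1)} = x^{(1)} + (1,…,1)`. -/
def succA {n : ℕ} (x : Fin n → Fin n → ℤ) (i : Fin n) : Fin n → ℤ :=
  if h : (i : ℕ) + 1 < n then x ⟨(i : ℕ) + 1, h⟩ else fun j => x ⟨0, i.pos⟩ j + 1

/-- A tuple `(x^{(1)},…,x^{(n)})` is an alcove. -/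
def IsAlcove {n : ℕ} (x : Fin n → Fin n → ℤ) : Prop :=
  (∀ i : Fin n, ∀ j, x i j ≤ succA x i j) ∧
  (∀ i : Fin n, (i : ℕ) + 1 < n → ∑ j, succA x i j = (∑ j, x i j) + 1)

/-- `P` is the permutation `P(x)` of the alcove `x`: `x^{(i+1)} = x^{(i)} + e_{P(x)(i)}`. -/
def IsPermOf {n : ℕ} (x : Fin n → Fin n → ℤ) (P : Equiv.Perm (Fin n)) : Prop :=
  ∀ i : Fin n, ∀ j, succA x i j = x i j + ev n (P i) j

/-- A permutation acts on `ℤⁿ` by permuting coordinates: `(σv)_{σ(i)} = v_i`. -/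
def permAct {n : ℕ} (σ : Equiv.Perm (Fin n)) (v : Fin n → ℤ) : Fin n → ℤ :=
  fun j => v (σ.symm j)

/-- The `n`-cycle `c = (1 2 ⋯ n)`. -/
def cyc (n : ℕ) [NeZero n] : Equiv.Perm (Fin n) := Equiv.addRight 1

/-- Rotation of alcoves. -/
def rotA {n : ℕ} [NeZero n] (x : Fin n → Fin n → ℤ) : Fin n → Fin n → ℤ := fun i =>
  if h : (i : ℕ) + 1 < n then
    permAct (cyc n)⁻¹ (fun j => x ⟨(i : ℕ) + 1, h⟩ j - varpi n 1 j)
  else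
    fun j => permAct (cyc n)⁻¹ (x 0) j + varpi n (n - 1) j

/-- An alcove is `λ`-permissible if `dom(x^{(i)} - ϖ_{i-1}) ⪯ λ` for all `i`. -/
noncomputable def Permissible {n : ℕ} (lam : Fin n → ℤ) (x : Fin n → Fin n → ℤ) : Prop :=
  ∀ i : Fin n, DomLE (domOf (fun j => x i j - varpi n (i : ℕ) j)) lam

/-- The Kottwitz–Rapoport relation `i ⊴_x j` (six-case rule). -/
def TriLE {n : ℕ} (x : Fin n → Fin n → ℤ) (P : Equiv.Perm (Fin n)) (i j : Fin n) : Prop :=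
  (x ⟨0, i.pos⟩ j < x ⟨0, i.pos⟩ i) ∨
  (x ⟨0, i.pos⟩ i = x ⟨0, i.pos⟩ j ∧
    ((P.symm i < i ∧ P.symm j < j ∧ j ≤ i) ∨
     (P.symm i < i ∧ j ≤ P.symm j) ∨
     (P.symm i = i ∧ P.symm j = j ∧ i = j) ∨
     (P.symm i = i ∧ j < P.symm j) ∨
     (i < P.symm i ∧ j < P.symm j ∧ j ≤ i)))
section
open Fin.CommRing
lemma cyc_pow_apply (n : ℕ) [NeZero n] (j : ℕ) (k : Fin n) :
    ((cyc n) ^ j) k = k + (j : Fin n) := by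
  induction j generalizing k with
  | zero => simp
  | succ j ih =>
    rw [pow_succ, Equiv.Perm.mul_apply]
    have : (cyc n) k = k + 1 := rfl
    rw [this, ih]
    push_cast
    ring

lemma permAct_inv_pow (n : ℕ) [NeZero n] (j : ℕ) (v : Fin n → ℤ) (k : Fin n) :
    permAct ((cyc n) ^ j)⁻¹ v k = v (k + (j : Fin n)) := by
  have : (Equiv.symm ((cyc n) ^ j)⁻¹) k = ((cyc n) ^ j) k := rfl
  rw [permAct, this, cyc_pow_apply]

lemma val_add_natCast (n : ℕ) [NeZero n] (k : Fin n) (j : ℕ) :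
    ((k + (j : Fin n)) : Fin n).val = ((k : ℕ) + j) % n := by
  rw [Fin.add_def, Fin.val_natCast]
  exact Nat.add_mod_mod _ _ _

lemma ind1 (n j a : ℕ) (hn : 0 < n) (hj : j < n) :
    (if (a + (j+1)) % n < j + 1 then (1:ℤ) else 0) =
    (if (a + (j+1)) % n < j then 1 else 0) + (if (a + 1) % n < 1 then 1 else 0) := by
  have hre : a + (j+1) = (a+1) + j := by ring
  rw [hre]
  have hrn : (a+1) % n < n := Nat.mod_lt _ hn
  rcases lt_or_ge ((a+1) % n + j) n with h|h
  · rw [← Nat.mod_add_mod, Nat.mod_eq_of_lt h]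
    split_ifs <;> omega
  · have h2 : ((a+1) % n + j) % n = (a+1) % n + j - n := by
      rw [Nat.mod_eq_sub_mod h, Nat.mod_eq_of_lt (by omega)]
    rw [← Nat.mod_add_mod, h2]
    split_ifs <;> omega

lemma ind2 (n i a : ℕ) (hi : i + 1 < n) (ha : a < n) :
    (if (a + 1) % n < i + 1 then (1:ℤ) else 0) - (if (a + 1) % n < 1 then 1 else 0) =
    (if a < i then 1 else 0) := by
  rcases eq_or_lt_of_le (Nat.succ_le_of_lt ha) with h|h
  · have h' : a + 1 = n := h
    rw [h', Nat.mod_self]; split_ifs <;> omega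
  · rw [Nat.mod_eq_of_lt h]; split_ifs <;> omega

lemma permAct_inv_one (n : ℕ) [NeZero n] (v : Fin n → ℤ) (k : Fin n) :
    permAct (cyc n)⁻¹ v k = v (k + 1) := by
  have := permAct_inv_pow n 1 v k
  rw [pow_one] at this
  rw [this]; norm_num

lemma val_add_one' (n : ℕ) [NeZero n] (k : Fin n) :
    ((k + 1 : Fin n)).val = ((k : ℕ) + 1) % n := by
  have : (1 : Fin n) = ((1:ℕ) : Fin n) := by norm_num
  rw [this, val_add_natCast]

set_option maxHeartbeats 1000000 in

lemma key (n : ℕ) [NeZero n] (x : Fin n → Fin n → ℤ) :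
    ∀ j : ℕ, ∀ _hjn : j ≤ n, ∀ i : Fin n,
      (∀ h : (i : ℕ) + j < n,
        rotA^[j] x i =
          permAct ((cyc n) ^ j)⁻¹ (fun l => x ⟨(i : ℕ) + j, h⟩ l - varpi n j l)) ∧
      (∀ _h : n ≤ (i : ℕ) + j, ∀ k,
        rotA^[j] x i k =
          permAct ((cyc n) ^ j)⁻¹
            (fun l => x ⟨(i : ℕ) + j - n, Nat.sub_lt_left_of_lt_add _h (by have := i.isLt; omega)⟩ l
              - varpi n ((i : ℕ) + j - n) l) k
          + varpi n (i : ℕ) k) := by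
  intro j
  induction j with
  | zero =>
    intro _ i
    refine ⟨fun h => ?_, fun h k => absurd i.isLt (by omega)⟩
    funext k
    rw [Function.iterate_zero_apply, permAct_inv_pow]
    simp [varpi]
  | succ j ih =>
    intro hj i
    have hn : 0 < n := Nat.pos_of_ne_zero (NeZero.ne n)
    have hjn : j ≤ n := by omega
    have hjlt : j < n := by omega
    rw [Function.iterate_succ_apply']
    set y := rotA^[j] x with hy
    constructor
    · intro h
      have hi1 : (i : ℕ) + 1 < n := by omega
      funext k
      have hrot : rotA y i k =
          y ⟨(i:ℕ)+1, hi1⟩ (k + 1) - varpi n 1 (k + 1) := by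
        rw [rotA, dif_pos hi1, permAct_inv_one]
      rw [hrot, permAct_inv_pow]
      have hIH := (ih hjn ⟨(i:ℕ)+1, hi1⟩).1 (by simp; omega)
      rw [hIH, permAct_inv_pow]
      have e2 : (⟨((⟨(i:ℕ)+1, hi1⟩ : Fin n) : ℕ) + j, by simp; omega⟩ : Fin n)
          = (⟨(i:ℕ)+(j+1), h⟩ : Fin n) := by
        apply Fin.ext; simp; omega
      have e1 : ((k + 1 : Fin n) + (j : Fin n)) = k + ((j+1 : ℕ) : Fin n) := by
        push_cast; ring
      rw [e2, e1]
      have hv : varpi n (j+1) (k + ((j+1:ℕ) : Fin n))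
          = varpi n j (k + ((j+1:ℕ) : Fin n)) + varpi n 1 (k + 1) := by
        simp only [varpi, val_add_natCast, val_add_one']
        exact ind1 n j (k : ℕ) hn hjlt
      rw [hv]; ring
    · intro h k
      rcases lt_or_ge ((i:ℕ)+1) n with hi1|hi1
      · have hrot : rotA y i k =
            y ⟨(i:ℕ)+1, hi1⟩ (k + 1) - varpi n 1 (k + 1) := by
          rw [rotA, dif_pos hi1, permAct_inv_one]
        rw [hrot, permAct_inv_pow]
        have hIH := (ih hjn ⟨(i:ℕ)+1, hi1⟩).2 (by simp; omega) (k + 1)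
        rw [hIH, permAct_inv_pow]
        have e1 : ((k + 1 : Fin n) + (j : Fin n)) = k + ((j+1 : ℕ) : Fin n) := by
          push_cast; ring
        rw [e1]
        simp only [Fin.val_mk]
        simp only [show (i:ℕ)+1+j-n = (i:ℕ)+(j+1)-n from by omega]
        have hv : varpi n ((i:ℕ)+1) (k + 1) - varpi n 1 (k + 1) = varpi n (i:ℕ) k := by
          simp only [varpi, val_add_one']
          exact ind2 n (i:ℕ) (k:ℕ) hi1 k.isLt
        linarith [hv]
      · have hieq : (i:ℕ) = n - 1 := by have := i.isLt; omega
        have hrot : rotA y i k = y 0 (k + 1) + varpi n (n-1) k := by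
          rw [rotA, dif_neg (by omega), permAct_inv_one]
        rw [hrot]
        have hIH := (ih hjn 0).1 (by simp; omega)
        rw [hIH, permAct_inv_pow, permAct_inv_pow]
        have e1 : ((k + 1 : Fin n) + (j : Fin n)) = k + ((j+1 : ℕ) : Fin n) := by
          push_cast; ring
        rw [e1]
        simp only [show (i:ℕ)+(j+1)-n = j from by omega]
        simp only [show ((0:Fin n):ℕ) + j = j from by simp]
        simp only [hieq]

end

theorem rot_iterate (n : ℕ) [NeZero n] (x : Fin n → Fin n → ℤ) (hx : IsAlcove x) :
    (∀ j : ℕ, ∀ _hj1 : 1 ≤ j, ∀ _hjn : j ≤ n, ∀ i : Fin n,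
      (∀ h : (i : ℕ) + j < n,
        rotA^[j] x i =
          permAct ((cyc n) ^ j)⁻¹ (fun l => x ⟨(i : ℕ) + j, h⟩ l - varpi n j l)) ∧
      (∀ _h : n ≤ (i : ℕ) + j, ∀ k,
        rotA^[j] x i k =
          permAct ((cyc n) ^ j)⁻¹
            (fun l => x ⟨(i : ℕ) + j - n, by have := i.isLt; omega⟩ l
              - varpi n ((i : ℕ) + j - n) l) k
          + varpi n (i : ℕ) k)) ∧
    rotA^[n] x = x := by
  constructor
  · intro j _hj1 hjn i
    exact key n x j hjn i
  · funext i k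
    have h2 := (key n x n le_rfl i).2 (by omega) k
    rw [h2, permAct_inv_pow]
    simp only [show (i : ℕ) + n - n = (i : ℕ) from by omega, Fin.natCast_self, add_zero,
      Fin.eta]
    ring
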